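/- Let l ≥ 4 be an integer, let G ∈ 𝒢_l, let C be an odd hole of G and let s, t be two nonadjacent vertices of C. Let P be an (s, t)-jump over C, and let Q1 and Q2 be the two internally disjoint (s, t)-paths of C. If P is a local jump or a short jump over C across Q1*, then |P| and |Q2| have the same parity; consequently P ∪ Q2 is an even hole and P ∪ Q1 is an odd cycle. -/

import Mathlib

open SimpleGraph

variable {V : Type*}

/-- The set of internal vertices of a walk from `x` to `y`. -/
def wInterior {G : SimpleGraph V} {x y : V} (P : G.Walk x y) : Set V :=
  {a | a ∈ P.support ∧ a ≠ x ∧ a ≠ y}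

/-- `P` is an induced path of `G`. -/
def IsInducedPath (G : SimpleGraph V) {x y : V} (P : G.Walk x y) : Prop :=
  P.IsPath ∧ ∀ a ∈ P.support, ∀ b ∈ P.support, G.Adj a b → s(a, b) ∈ P.edges

/-- A hole of `G`: an induced cycle of length at least 4. -/
def IsHole (G : SimpleGraph V) {v : V} (w : G.Walk v v) : Prop :=
  w.IsCycle ∧ 4 ≤ w.length ∧
    ∀ a ∈ w.support, ∀ b ∈ w.support, G.Adj a b → s(a, b) ∈ w.edges

/-- An odd hole of `G`. -/
def IsOddHole (G : SimpleGraph V) {v : V} (w : G.Walk v v) : Prop :=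
  IsHole G w ∧ Odd w.length

/-- `G` belongs to the family `𝒢ₗ`: it has girth `2l+1` and
no odd hole of length at least `2l+3`. -/
def MemGFam (G : SimpleGraph V) (l : ℕ) : Prop :=
  G.girth = (2 * l + 1 : ℕ) ∧
    ∀ (v : V) (w : G.Walk v v), IsOddHole G w → w.length < 2 * l + 3

/-- `G` is `k`-vertex-critical. -/
def IsVertexCritical (G : SimpleGraph V) (k : ℕ) : Prop :=
  G.chromaticNumber = k ∧
    ∀ v : V, (G.induce {u | u ≠ v}).chromaticNumber < k

/-- `S` is a vertex cut of `G`: deleting `S` leaves a disconnected graph. -/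
def IsVertexCut (G : SimpleGraph V) (S : Set V) : Prop :=
  ¬ (G.induce Sᶜ).Preconnected

/-- `G` has a `K2`-cut. -/
def HasK2Cut (G : SimpleGraph V) : Prop :=
  ∃ u v : V, G.Adj u v ∧ IsVertexCut G {u, v}

/-- `G` has a `P3`-cut. -/
def HasP3Cut (G : SimpleGraph V) : Prop :=
  ∃ u v w : V, u ≠ w ∧ G.Adj u v ∧ G.Adj v w ∧ ¬ G.Adj u w ∧ IsVertexCut G {u, v, w}

/-- `G` has a 2-edge-cut: two edges whose removal disconnects the graph. -/
def Has2EdgeCut (G : SimpleGraph V) : Prop :=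
  ∃ e f : Sym2 V, e ≠ f ∧ e ∈ G.edgeSet ∧ f ∈ G.edgeSet ∧
    ¬ (G.deleteEdges {e, f}).Preconnected

/-- `Q1`, `Q2` are the two internally disjoint `(x,y)`-paths of the cycle `w`. -/
def ArcsOf (G : SimpleGraph V) {v x y : V} (w : G.Walk v v) (Q1 Q2 : G.Walk x y) : Prop :=
  x ∈ w.support ∧ y ∈ w.support ∧ x ≠ y ∧ Q1.IsPath ∧ Q2.IsPath ∧
    ({a | a ∈ Q1.support} ∩ {a | a ∈ Q2.support} = {x, y}) ∧
    ({e | e ∈ w.edges} = {e | e ∈ Q1.edges} ∪ {e | e ∈ Q2.edges})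

/-- `P` is a chordal path of the hole `w`: `w ∪ P` is an induced theta-subgraph of `G`. -/
def IsChordalPath (G : SimpleGraph V) {v x y : V} (w : G.Walk v v) (P : G.Walk x y) : Prop :=
  IsHole G w ∧ P.IsPath ∧ 2 ≤ P.length ∧ x ∈ w.support ∧ y ∈ w.support ∧ x ≠ y ∧
    (∀ a ∈ wInterior P, a ∉ w.support) ∧
    (∀ a, (a ∈ w.support ∨ a ∈ P.support) → ∀ b, (b ∈ w.support ∨ b ∈ P.support) →
      G.Adj a b → (s(a, b) ∈ w.edges ∨ s(a, b) ∈ P.edges))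

/-- `P` is an `(s,t)`-jump over the hole `w`. -/
def IsJump (G : SimpleGraph V) {v s t : V} (w : G.Walk v v) (P : G.Walk s t) : Prop :=
  IsHole G w ∧ s ∈ w.support ∧ t ∈ w.support ∧ s ≠ t ∧ ¬ G.Adj s t ∧
    IsInducedPath G P ∧ ∀ a ∈ wInterior P, a ∉ w.support

/-- `P` is a local jump over `w` across the interior of the arc `Q1`
(`Q1`, `Q2` being the two arcs of `w` between the ends of `P`). -/
def IsLocalJumpAcross (G : SimpleGraph V) {v s t : V} (w : G.Walk v v)
    (P Q1 Q2 : G.Walk s t) : Prop :=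
  IsJump G w P ∧ ArcsOf G w Q1 Q2 ∧
    (∃ a ∈ wInterior Q1, ∃ b ∈ wInterior P, G.Adj a b) ∧
    (∀ a ∈ wInterior Q2, ∀ b ∈ wInterior P, ¬ G.Adj a b)

/-- `P` is a local jump over `w`. -/
def IsLocalJump (G : SimpleGraph V) {v s t : V} (w : G.Walk v v) (P : G.Walk s t) : Prop :=
  ∃ Q1 Q2 : G.Walk s t, IsLocalJumpAcross G w P Q1 Q2

/-- `P` is a local jump over `w` across one vertex. -/
def IsLocalJumpAcrossOne (G : SimpleGraph V) {v s t : V} (w : G.Walk v v)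
    (P : G.Walk s t) : Prop :=
  ∃ Q1 Q2 : G.Walk s t, IsLocalJumpAcross G w P Q1 Q2 ∧ Q1.length = 2

/-- `P` is a short jump over `w`: no internal vertex of either arc of `w`
has a neighbour among the internal vertices of `P`. -/
def IsShortJump (G : SimpleGraph V) {v s t : V} (w : G.Walk v v) (P : G.Walk s t) : Prop :=
  IsJump G w P ∧
    ∀ a ∈ w.support, a ≠ s → a ≠ t → ∀ b ∈ wInterior P, ¬ G.Adj a b

/-- `P` is a short jump over `w` across the interior of `Q1`, i.e. `P ∪ Q1` is an
odd hole (a jump hole over `w`). -/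
def IsShortJumpAcross (G : SimpleGraph V) {v s t : V} (w : G.Walk v v)
    (P Q1 Q2 : G.Walk s t) : Prop :=
  IsShortJump G w P ∧ ArcsOf G w Q1 Q2 ∧ IsOddHole G (P.append Q1.reverse)

/-- `x` lies in some jump hole over `w`. -/
def InJumpHoleOver (G : SimpleGraph V) {v : V} (w : G.Walk v v) (x : V) : Prop :=
  ∃ (s t : V) (P Q1 Q2 : G.Walk s t),
    IsShortJumpAcross G w P Q1 Q2 ∧ (x ∈ P.support ∨ x ∈ Q1.support)

/-- `a`, `b`, `c`, `d` appear on the cycle `w` in this cyclic order. -/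
def CyclicOrder4 (G : SimpleGraph V) {v : V} (w : G.Walk v v) (a b c d : V) : Prop :=
  ∃ n : ℕ, List.Sublist [a, b, c, d] (w.support.tail.rotate n)

/-- A `K4`-subdivision in `G`: four distinct branch vertices joined by six
internally disjoint paths (the arrises). -/
structure K4Sub (G : SimpleGraph V) where
  u1 : V
  u2 : V
  u3 : V
  u4 : V
  P1 : G.Walk u1 u2
  P2 : G.Walk u3 u4
  Q1 : G.Walk u2 u3
  Q2 : G.Walk u1 u4
  L1 : G.Walk u1 u3
  L2 : G.Walk u2 u4
  hu : List.Nodup [u1, u2, u3, u4]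
  hP1 : P1.IsPath
  hP2 : P2.IsPath
  hQ1 : Q1.IsPath
  hQ2 : Q2.IsPath
  hL1 : L1.IsPath
  hL2 : L2.IsPath
  hP : ∀ a ∈ P1.support, a ∉ P2.support
  hQ : ∀ a ∈ Q1.support, a ∉ Q2.support
  hL : ∀ a ∈ L1.support, a ∉ L2.support

namespace K4Sub

variable {G : SimpleGraph V}

/-- The face cycle `C1 = P1 ∪ Q1 ∪ L1`. -/
def C1 (H : K4Sub G) : G.Walk H.u1 H.u1 := (H.P1.append H.Q1).append H.L1.reverse
/-- The face cycle `C2 = P1 ∪ Q2 ∪ L2`. -/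
def C2 (H : K4Sub G) : G.Walk H.u1 H.u1 := (H.P1.append H.L2).append H.Q2.reverse
/-- The face cycle `C3 = P2 ∪ Q1 ∪ L2`. -/
def C3 (H : K4Sub G) : G.Walk H.u2 H.u2 := (H.Q1.append H.P2).append H.L2.reverse
/-- The face cycle `C4 = C1 △ C2 △ C3 = P2 ∪ Q2 ∪ L1`. -/
def C4 (H : K4Sub G) : G.Walk H.u1 H.u1 := (H.L1.append H.P2).append H.Q2.reverse

/-- The vertex set of the subdivision. -/
def verts (H : K4Sub G) : Set V :=
  {a | a ∈ H.P1.support ∨ a ∈ H.P2.support ∨ a ∈ H.Q1.support ∨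
       a ∈ H.Q2.support ∨ a ∈ H.L1.support ∨ a ∈ H.L2.support}

/-- The edge set of the subdivision. -/
def edges (H : K4Sub G) : Set (Sym2 V) :=
  {e | e ∈ H.P1.edges ∨ e ∈ H.P2.edges ∨ e ∈ H.Q1.edges ∨
       e ∈ H.Q2.edges ∨ e ∈ H.L1.edges ∨ e ∈ H.L2.edges}

end K4Sub

/-- `H` is an odd `K4`-subdivision: all four face cycles are odd holes. -/
def IsOddK4 (G : SimpleGraph V) (H : K4Sub G) : Prop :=
  IsOddHole G H.C1 ∧ IsOddHole G H.C2 ∧ IsOddHole G H.C3 ∧ IsOddHole G H.C4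

/-- `G` has an odd `K4`-subdivision. -/
def HasOddK4 (G : SimpleGraph V) : Prop := ∃ H : K4Sub G, IsOddK4 G H

/-- `H` is a balanced `K4`-subdivision of type `(1,2)`. -/
def IsBalancedK4 (G : SimpleGraph V) (H : K4Sub G) : Prop :=
  IsOddHole G H.C1 ∧ IsOddHole G H.C2 ∧
    IsHole G H.C3 ∧ Even H.C3.length ∧ IsHole G H.C4 ∧ Even H.C4.length ∧
    H.Q1.length = 1 ∧ 2 ≤ H.L2.length

/-- `G` contains a balanced `K4`-subdivision of type `(1,2)`. -/
def HasBalancedK4 (G : SimpleGraph V) : Prop := ∃ H : K4Sub G, IsBalancedK4 G H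

/-- `P` is a direct connection linking the (vertex sets of) two disjoint induced
subgraphs `S1` and `S2`. -/
def IsDirectConnection (G : SimpleGraph V) (S1 S2 : Set V) {v1 v2 : V}
    (P : G.Walk v1 v2) : Prop :=
  IsInducedPath G P ∧ (∀ x ∈ P.support, x ∉ S1 ∧ x ∉ S2) ∧
    (∃ y ∈ S1, G.Adj v1 y) ∧ (∃ y ∈ S2, G.Adj v2 y) ∧
    (∀ x ∈ P.support, (∃ y ∈ S1, G.Adj x y) → x = v1) ∧
    (∀ x ∈ P.support, (∃ y ∈ S2, G.Adj x y) → x = v2)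

/-- `P` is a minimal direct connection linking `S1` and `S2`. -/
def IsMinimalDirectConnection (G : SimpleGraph V) (S1 S2 : Set V) {v1 v2 : V}
    (P : G.Walk v1 v2) : Prop :=
  IsDirectConnection G S1 S2 P ∧
    ∀ (w1 w2 : V) (P' : G.Walk w1 w2), IsDirectConnection G S1 S2 P' →
      (∀ x ∈ P'.support, x ∈ P.support) → ∀ x ∈ P.support, x ∈ P'.support

section JumpAuxSec
variable {G : SimpleGraph V}

namespace JumpAux

lemma exists_edge_of_mem_support {x y : V} (p : G.Walk x y) (hl : 0 < p.length) :
    ∀ c ∈ p.support, ∃ e ∈ p.edges, c ∈ e := by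
  induction p with
  | nil => simp at hl
  | @cons u u' y h q ih =>
    intro c hc
    rw [SimpleGraph.Walk.support_cons, List.mem_cons] at hc
    rcases hc with rfl | hc
    · exact ⟨s(c, u'), by simp, by simp⟩
    · cases q with
      | nil =>
        simp only [SimpleGraph.Walk.support_nil, List.mem_singleton] at hc
        subst hc
        exact ⟨s(u, c), by simp, by simp⟩
      | cons h' q' =>
        obtain ⟨e, he, hce⟩ := ih (by simp [SimpleGraph.Walk.length_cons]) c hc
        refine ⟨e, ?_, hce⟩
        rw [SimpleGraph.Walk.edges_cons, List.mem_cons]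
        exact Or.inr he

lemma mem_support_of_edge {x y : V} {p : G.Walk x y} {e : Sym2 V} (he : e ∈ p.edges) :
    ∀ c ∈ e, c ∈ p.support := by
  revert he
  induction e using Sym2.ind with
  | _ u v =>
    intro he c hc
    rw [Sym2.mem_iff] at hc
    rcases hc with rfl | rfl
    · exact p.fst_mem_support_of_mem_edges he
    · exact p.snd_mem_support_of_mem_edges he

lemma girth_le_of_isCycle {v : V} {c : G.Walk v v} (hc : c.IsCycle) : G.girth ≤ c.length := by
  have h1 : G.egirth ≤ (c.length : ℕ∞) := by
    refine le_trans ?_ le_rfl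
    exact iInf_le_of_le v (iInf_le_of_le c (iInf_le _ hc))
  have h2 := ENat.toNat_le_toNat h1 (by simp)
  simpa [SimpleGraph.girth] using h2

lemma eq_st_of_mem_edges {s t : V} {e : Sym2 V} (hst : s ≠ t) (he : e ∈ G.edgeSet)
    (h1 : ∀ c ∈ e, c = s ∨ c = t) : e = s(s, t) := by
  revert he h1
  induction e using Sym2.ind with
  | _ u v =>
    intro he h1
    have huv : u ≠ v := G.ne_of_adj he
    rcases h1 u (by simp) with rfl | rfl <;> rcases h1 v (by simp) with rfl | rfl
    · exact absurd rfl huv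
    · rfl
    · exact Sym2.eq_swap
    · exact absurd rfl huv

lemma length_eq_one_of_st_edge {a b : V} {p : G.Walk a b} (hxy : a ≠ b) (hp : p.IsPath)
    (he : s(a, b) ∈ p.edges) : p.length = 1 := by
  cases p with
  | nil => simp at he
  | @cons _ c _ h q =>
    rw [SimpleGraph.Walk.edges_cons, List.mem_cons] at he
    rcases he with he | he
    · rw [Sym2.eq_iff] at he
      rcases he with ⟨-, rfl⟩ | ⟨rfl, rfl⟩
      · cases q with
        | nil => simp
        | cons h' q' =>
          exfalso
          have hq := (SimpleGraph.Walk.cons_isPath_iff _ _).mp hp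
          have := hq.1.support_nodup
          rw [SimpleGraph.Walk.support_eq_cons] at this
          exact (List.nodup_cons.mp this).1
            (by simpa using (SimpleGraph.Walk.cons h' q').end_mem_support)
      · exact (hxy rfl).elim
    · exfalso
      have hq := (SimpleGraph.Walk.cons_isPath_iff _ _).mp hp
      exact hq.2 (q.fst_mem_support_of_mem_edges he)

lemma two_le_length {x y : V} {p : G.Walk x y} (hxy : x ≠ y) (hn : ¬ G.Adj x y) :
    2 ≤ p.length := by
  cases p with
  | nil => exact absurd rfl hxy
  | cons h q =>
    cases q with
    | nil => exact absurd h hn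
    | cons h' q' =>
      rw [SimpleGraph.Walk.length_cons, SimpleGraph.Walk.length_cons]
      omega

lemma one_le_length {x y : V} {p : G.Walk x y} (hxy : x ≠ y) : 1 ≤ p.length := by
  rcases Nat.eq_zero_or_pos p.length with h | h
  · exact absurd (SimpleGraph.Walk.eq_of_length_eq_zero h) hxy
  · exact h

lemma isCycle_append_reverse {x y : V} {p q : G.Walk x y}
    (hp : p.IsPath) (hq : q.IsPath) (hxy : x ≠ y) (hq2 : 2 ≤ q.length)
    (hint : ∀ c ∈ p.support, c ∈ q.support → c = x ∨ c = y) :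
    (p.append q.reverse).IsCycle := by
  have hedisj : ∀ e, e ∈ p.edges → e ∈ q.edges → False := by
    intro e
    induction e using Sym2.ind with
    | _ u u' =>
      intro he1 he2
      have hG : s(u, u') ∈ G.edgeSet := p.edges_subset_edgeSet he1
      have hcs : ∀ c ∈ s(u, u'), c = x ∨ c = y := by
        intro c hc
        exact hint c (mem_support_of_edge he1 c hc) (mem_support_of_edge he2 c hc)
      have hexy : s(u, u') = s(x, y) := eq_st_of_mem_edges hxy hG hcs
      rw [hexy] at he2
      have := length_eq_one_of_st_edge hxy hq he2
      omega
  rw [SimpleGraph.Walk.isCycle_def]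
  refine ⟨⟨?_⟩, ?_, ?_⟩
  · rw [SimpleGraph.Walk.edges_append, SimpleGraph.Walk.edges_reverse]
    refine List.Nodup.append hp.isTrail.edges_nodup (List.nodup_reverse.mpr hq.isTrail.edges_nodup) ?_
    intro e he1 he2
    exact hedisj e he1 (List.mem_reverse.mp he2)
  · intro hnil
    have := congrArg SimpleGraph.Walk.length hnil
    rw [SimpleGraph.Walk.length_append, SimpleGraph.Walk.length_reverse] at this
    have h1 := one_le_length (p := p) hxy
    simp only [SimpleGraph.Walk.length_nil] at this
    omega
  · rw [SimpleGraph.Walk.support_append]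
    have hps : p.support = x :: p.support.tail := p.support_eq_cons
    rw [hps, List.cons_append, List.tail_cons]
    have hpnd : (x :: p.support.tail).Nodup := by rw [← hps]; exact hp.support_nodup
    have hqrnd : q.reverse.support.Nodup := hq.reverse.support_nodup
    have hqrs : q.reverse.support = y :: q.reverse.support.tail := q.reverse.support_eq_cons
    refine List.Nodup.append ((List.nodup_cons.mp hpnd).2) ?_ ?_
    · have := hqrnd
      rw [hqrs] at this
      exact (List.nodup_cons.mp this).2
    · intro c hc1 hc2
      have hcp : c ∈ p.support := by rw [hps]; exact List.mem_cons_of_mem _ hc1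
      have hcq : c ∈ q.support := by
        have : c ∈ q.reverse.support := by rw [hqrs]; exact List.mem_cons_of_mem _ hc2
        rwa [SimpleGraph.Walk.support_reverse, List.mem_reverse] at this
      rcases hint c hcp hcq with rfl | rfl
      · exact (List.nodup_cons.mp hpnd).1 hc1
      · have := hqrnd
        rw [hqrs] at this
        exact (List.nodup_cons.mp this).1 hc2

lemma mem_takeUntil_dropUntil [DecidableEq V] {x y u : V} {p : G.Walk x y} (hp : p.IsPath)
    (hu : u ∈ p.support) {c : V} (h1 : c ∈ (p.takeUntil u hu).support)
    (h2 : c ∈ (p.dropUntil u hu).support) : c = u := by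
  by_contra hc
  have hnd : ((p.takeUntil u hu).append (p.dropUntil u hu)).support.Nodup := by
    rw [SimpleGraph.Walk.take_spec]; exact hp.support_nodup
  rw [SimpleGraph.Walk.support_append] at hnd
  have hdisj := (List.nodup_append.mp hnd).2.2
  have h2' : c ∈ (p.dropUntil u hu).support.tail := by
    have := (p.dropUntil u hu).support_eq_cons
    rw [this, List.mem_cons] at h2
    rcases h2 with rfl | h2
    · exact absurd rfl hc
    · exact h2
  exact hdisj c h1 c h2' rfl

lemma length_eq_add {v x y : V} {w : G.Walk v v} {q1 q2 : G.Walk x y}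
    (hw : w.edges.Nodup) (h1 : q1.edges.Nodup) (h2 : q2.edges.Nodup)
    (hE : {e | e ∈ w.edges} = {e | e ∈ q1.edges} ∪ {e | e ∈ q2.edges})
    (hdisj : ∀ e, e ∈ q1.edges → e ∈ q2.edges → False) :
    w.length = q1.length + q2.length := by
  classical
  have hmem : ∀ e, e ∈ w.edges ↔ (e ∈ q1.edges ∨ e ∈ q2.edges) := by
    intro e
    have := Set.ext_iff.mp hE e
    simpa using this
  have hfin : w.edges.toFinset = q1.edges.toFinset ∪ q2.edges.toFinset := by
    ext e
    simp only [List.mem_toFinset, Finset.mem_union]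
    exact hmem e
  have hcard := congrArg Finset.card hfin
  rw [Finset.card_union_of_disjoint (by
    rw [Finset.disjoint_left]
    intro e he1 he2
    exact hdisj e (List.mem_toFinset.mp he1) (List.mem_toFinset.mp he2))] at hcard
  rw [List.toFinset_card_of_nodup hw, List.toFinset_card_of_nodup h1,
    List.toFinset_card_of_nodup h2] at hcard
  simpa [SimpleGraph.Walk.length_edges] using hcard

end JumpAux

end JumpAuxSec

/-- If `P` is a local or short jump over the odd hole `w` across the
interior of the arc `Q1`, then `|P|` and `|Q2|` have the same parity; consequently
`P ∪ Q2` is an even hole and `P ∪ Q1` is an odd cycle. -/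
theorem jump_parity {V : Type*} [Fintype V]
    (l : ℕ) (hl : 4 ≤ l) (G : SimpleGraph V) (hG : MemGFam G l)
    {v s t : V} (w : G.Walk v v) (hw : IsOddHole G w)
    (P Q1 Q2 : G.Walk s t)
    (h : IsLocalJumpAcross G w P Q1 Q2 ∨ IsShortJumpAcross G w P Q1 Q2) :
    P.length % 2 = Q2.length % 2 ∧
    (IsHole G (P.append Q2.reverse) ∧ Even (P.append Q2.reverse).length) ∧
    ((P.append Q1.reverse).IsCycle ∧ Odd (P.append Q1.reverse).length) := by
  classical
  obtain ⟨hJ, hArcs⟩ : IsJump G w P ∧ ArcsOf G w Q1 Q2 := by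
    rcases h with ⟨hJ, hA, -, -⟩ | ⟨⟨hJ, -⟩, hA, -⟩ <;> exact ⟨hJ, hA⟩
  obtain ⟨hHole, hsw, htw, hst, hnadj, hInd, hPav⟩ := hJ
  obtain ⟨hwc, hw4, hwchord⟩ := hHole
  obtain ⟨-, -, -, hQ1p, hQ2p, hsupInt, hEdgeEq⟩ := hArcs
  have hPpath : P.IsPath := hInd.1
  have hint12 : ∀ c, c ∈ Q1.support → c ∈ Q2.support → c = s ∨ c = t := by
    intro c h1 h2
    have hc : c ∈ ({s, t} : Set V) := by
      rw [← hsupInt]; exact ⟨h1, h2⟩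
    simpa using hc
  have hQ1esub : ∀ e ∈ Q1.edges, e ∈ w.edges := by
    intro e he
    have := (Set.ext_iff.mp hEdgeEq e).mpr (Or.inl he)
    simpa using this
  have hQ2esub : ∀ e ∈ Q2.edges, e ∈ w.edges := by
    intro e he
    have := (Set.ext_iff.mp hEdgeEq e).mpr (Or.inr he)
    simpa using this
  have hEdisj : ∀ e, e ∈ Q1.edges → e ∈ Q2.edges → False := by
    intro e he1 he2
    have heG : e ∈ G.edgeSet := Q1.edges_subset_edgeSet he1
    have hcs : ∀ c ∈ e, c = s ∨ c = t := fun c hc =>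
      hint12 c (JumpAux.mem_support_of_edge he1 c hc) (JumpAux.mem_support_of_edge he2 c hc)
    have hest := JumpAux.eq_st_of_mem_edges hst heG hcs
    rw [hest] at heG
    exact hnadj ((SimpleGraph.mem_edgeSet (G := G)).mp heG)
  have hQ1sup : ∀ c ∈ Q1.support, c ∈ w.support := by
    intro c hc
    have h1 : 0 < Q1.length := JumpAux.one_le_length hst
    obtain ⟨e, he, hce⟩ := JumpAux.exists_edge_of_mem_support Q1 h1 c hc
    exact JumpAux.mem_support_of_edge (hQ1esub e he) c hce
  have hQ2sup : ∀ c ∈ Q2.support, c ∈ w.support := by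
    intro c hc
    have h1 : 0 < Q2.length := JumpAux.one_le_length hst
    obtain ⟨e, he, hce⟩ := JumpAux.exists_edge_of_mem_support Q2 h1 c hc
    exact JumpAux.mem_support_of_edge (hQ2esub e he) c hce
  have hQ1len : 2 ≤ Q1.length := JumpAux.two_le_length hst hnadj
  have hQ2len : 2 ≤ Q2.length := JumpAux.two_le_length hst hnadj
  have hPlen : 2 ≤ P.length := JumpAux.two_le_length hst hnadj
  have hwNodup : w.edges.Nodup := hwc.isCircuit.isTrail.edges_nodup
  have hsum' : w.length = Q1.length + Q2.length :=
    JumpAux.length_eq_add hwNodup hQ1p.isTrail.edges_nodup hQ2p.isTrail.edges_nodup hEdgeEq hEdisj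
  have hglen : G.girth ≤ w.length := JumpAux.girth_le_of_isCycle hwc
  rw [hG.1] at hglen
  have hwodd : w.length % 2 = 1 := Nat.odd_iff.mp hw.2
  have hwub : w.length < 2 * l + 3 := hG.2 v w hw
  have hwlen : w.length = 2 * l + 1 := by omega
  have hPQ1int : ∀ c ∈ P.support, c ∈ Q1.support → c = s ∨ c = t := by
    intro c h1 h2
    by_contra hc
    push_neg at hc
    exact hPav c ⟨h1, hc.1, hc.2⟩ (hQ1sup c h2)
  have hPQ2int : ∀ c ∈ P.support, c ∈ Q2.support → c = s ∨ c = t := by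
    intro c h1 h2
    by_contra hc
    push_neg at hc
    exact hPav c ⟨h1, hc.1, hc.2⟩ (hQ2sup c h2)
  have hHcyc : (P.append Q2.reverse).IsCycle :=
    JumpAux.isCycle_append_reverse hPpath hQ2p hst hQ2len hPQ2int
  have hHlen : (P.append Q2.reverse).length = P.length + Q2.length := by
    rw [Walk.length_append, Walk.length_reverse]
  have hHg : 2 * l + 1 ≤ (P.append Q2.reverse).length := by
    have := JumpAux.girth_le_of_isCycle hHcyc
    rw [hG.1] at this
    exact this
  have hmix : ∀ a, a ∈ P.support → a ∉ Q2.support → ∀ b, b ∈ Q2.support → b ∉ P.support →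
      G.Adj a b → False := by
    intro a haP haQ b hbQ hbP hab
    have has : a ≠ s := fun hh => haQ (hh ▸ Q2.start_mem_support)
    have hat : a ≠ t := fun hh => haQ (hh ▸ Q2.end_mem_support)
    have hbs : b ≠ s := fun hh => hbP (hh ▸ P.start_mem_support)
    have hbt : b ≠ t := fun hh => hbP (hh ▸ P.end_mem_support)
    rcases h with ⟨-, -, -, hB⟩ | ⟨⟨-, hS⟩, -, -⟩
    · exact hB b ⟨hbQ, hbs, hbt⟩ a ⟨haP, has, hat⟩ hab.symm
    · exact hS b (hQ2sup b hbQ) hbs hbt a ⟨haP, has, hat⟩ hab.symm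
  have hQ2chord : ∀ a ∈ Q2.support, ∀ b ∈ Q2.support, G.Adj a b → s(a, b) ∈ Q2.edges := by
    intro a haQ b hbQ hab
    have hw' := hwchord a (hQ2sup a haQ) b (hQ2sup b hbQ) hab
    have hor : s(a, b) ∈ Q1.edges ∨ s(a, b) ∈ Q2.edges := by
      have := (Set.ext_iff.mp hEdgeEq s(a, b)).mp hw'
      simpa using this
    rcases hor with h1 | h2
    · exfalso
      have haQ1 : a ∈ Q1.support := Q1.fst_mem_support_of_mem_edges h1
      have hbQ1 : b ∈ Q1.support := Q1.snd_mem_support_of_mem_edges h1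
      rcases hint12 a haQ1 haQ with rfl | rfl <;> rcases hint12 b hbQ1 hbQ with rfl | rfl
      · exact hab.ne rfl
      · exact hnadj hab
      · exact hnadj hab.symm
      · exact hab.ne rfl
    · exact h2
  have hHchord : ∀ a ∈ (P.append Q2.reverse).support, ∀ b ∈ (P.append Q2.reverse).support,
      G.Adj a b → s(a, b) ∈ (P.append Q2.reverse).edges := by
    intro a ha b hb hab
    rw [Walk.mem_support_append_iff, Walk.support_reverse, List.mem_reverse] at ha hb
    rw [Walk.edges_append, List.mem_append, Walk.edges_reverse, List.mem_reverse]
    by_cases haP : a ∈ P.support <;> by_cases hbP : b ∈ P.support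
    · exact Or.inl (hInd.2 a haP b hbP hab)
    · have hbQ : b ∈ Q2.support := hb.resolve_left hbP
      by_cases haQ : a ∈ Q2.support
      · exact Or.inr (hQ2chord a haQ b hbQ hab)
      · exact (hmix a haP haQ b hbQ hbP hab).elim
    · have haQ : a ∈ Q2.support := ha.resolve_left haP
      by_cases hbQ : b ∈ Q2.support
      · exact Or.inr (hQ2chord a haQ b hbQ hab)
      · exact (hmix b hbP hbQ a haQ haP hab.symm).elim
    · exact Or.inr (hQ2chord a (ha.resolve_left haP) b (hb.resolve_left hbP) hab)
  have hHhole : IsHole G (P.append Q2.reverse) := ⟨hHcyc, by omega, hHchord⟩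
  have hpar : P.length % 2 = Q2.length % 2 := by
    by_contra hne
    have hHodd : Odd (P.append Q2.reverse).length := by
      rw [Nat.odd_iff, hHlen]; omega
    have hub := hG.2 s _ ⟨hHhole, hHodd⟩
    rw [Nat.odd_iff, hHlen] at hHodd
    rw [hHlen] at hub hHg
    have hPQ1 : P.length = Q1.length := by omega
    rcases h with ⟨-, -, ⟨a, haI, b, hbI, hab⟩, -⟩ | ⟨-, -, hOH1⟩
    · obtain ⟨haQ1, has, hat⟩ := haI
      obtain ⟨hbPs, hbs, hbt⟩ := hbI
      have haP : a ∉ P.support := by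
        intro hc
        rcases hPQ1int a hc haQ1 with rfl | rfl
        · exact has rfl
        · exact hat rfl
      have hT1p : (Q1.takeUntil a haQ1).IsPath := hQ1p.takeUntil haQ1
      have hD1p : (Q1.dropUntil a haQ1).IsPath := hQ1p.dropUntil haQ1
      have hT2p : (P.takeUntil b hbPs).IsPath := hPpath.takeUntil hbPs
      have hD2p : (P.dropUntil b hbPs).IsPath := hPpath.dropUntil hbPs
      have hsa : s ≠ a := fun hh => has hh.symm
      have hsb : s ≠ b := fun hh => hbs hh.symm
      have hbt' : b ≠ t := hbt
      -- first cycle : s →(Q1) a → b →(P backwards) s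
      have hq1p : ((Walk.cons hab (P.takeUntil b hbPs).reverse).reverse : G.Walk s a).IsPath := by
        refine Walk.IsPath.reverse (Walk.IsPath.cons hT2p.reverse ?_)
        rw [Walk.support_reverse, List.mem_reverse]
        intro hc
        exact haP (P.support_takeUntil_subset hbPs hc)
      have hq1len : ((Walk.cons hab (P.takeUntil b hbPs).reverse).reverse : G.Walk s a).length
          = (P.takeUntil b hbPs).length + 1 := by
        rw [Walk.length_reverse, Walk.length_cons, Walk.length_reverse]
      have hT2len1 : 1 ≤ (P.takeUntil b hbPs).length := JumpAux.one_le_length hsb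
      have hint1 : ∀ c ∈ (Q1.takeUntil a haQ1).support,
          c ∈ ((Walk.cons hab (P.takeUntil b hbPs).reverse).reverse : G.Walk s a).support →
          c = s ∨ c = a := by
        intro c h1 h2
        rw [Walk.support_reverse, List.mem_reverse, Walk.support_cons, List.mem_cons] at h2
        rcases h2 with rfl | h2
        · exact Or.inr rfl
        · rw [Walk.support_reverse, List.mem_reverse] at h2
          have hcP : c ∈ P.support := P.support_takeUntil_subset hbPs h2
          have hcQ1 : c ∈ Q1.support := Q1.support_takeUntil_subset haQ1 h1
          rcases hPQ1int c hcP hcQ1 with rfl | rfl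
          · exact Or.inl rfl
          · exfalso
            have := JumpAux.mem_takeUntil_dropUntil hQ1p haQ1 h1
              (Q1.dropUntil a haQ1).end_mem_support
            exact hat this.symm
      have hc1 : ((Q1.takeUntil a haQ1).append
          ((Walk.cons hab (P.takeUntil b hbPs).reverse).reverse : G.Walk s a).reverse).IsCycle :=
        JumpAux.isCycle_append_reverse hT1p hq1p hsa (by omega) hint1
      have hg1 := JumpAux.girth_le_of_isCycle hc1
      rw [hG.1, Walk.length_append, Walk.length_reverse, hq1len] at hg1
      -- second cycle : a → b →(P) t →(Q1 backwards) a
      have hq2p : ((Walk.cons hab (P.dropUntil b hbPs)) : G.Walk a t).IsPath := by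
        refine Walk.IsPath.cons hD2p ?_
        intro hc
        exact haP (P.support_dropUntil_subset hbPs hc)
      have hq2len : ((Walk.cons hab (P.dropUntil b hbPs)) : G.Walk a t).length
          = (P.dropUntil b hbPs).length + 1 := by
        rw [Walk.length_cons]
      have hD2len1 : 1 ≤ (P.dropUntil b hbPs).length := JumpAux.one_le_length hbt'
      have hint2 : ∀ c ∈ (Q1.dropUntil a haQ1).support,
          c ∈ ((Walk.cons hab (P.dropUntil b hbPs)) : G.Walk a t).support →
          c = a ∨ c = t := by
        intro c h1 h2
        rw [Walk.support_cons, List.mem_cons] at h2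
        rcases h2 with rfl | h2
        · exact Or.inl rfl
        · have hcP : c ∈ P.support := P.support_dropUntil_subset hbPs h2
          have hcQ1 : c ∈ Q1.support := Q1.support_dropUntil_subset haQ1 h1
          rcases hPQ1int c hcP hcQ1 with rfl | rfl
          · exfalso
            have := JumpAux.mem_takeUntil_dropUntil hQ1p haQ1
              (Q1.takeUntil a haQ1).start_mem_support h1
            exact has this.symm
          · exact Or.inr rfl
      have hc2 : ((Q1.dropUntil a haQ1).append
          ((Walk.cons hab (P.dropUntil b hbPs)) : G.Walk a t).reverse).IsCycle :=
        JumpAux.isCycle_append_reverse hD1p hq2p hat (by omega) hint2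
      have hg2 := JumpAux.girth_le_of_isCycle hc2
      rw [hG.1, Walk.length_append, Walk.length_reverse, hq2len] at hg2
      -- length bookkeeping
      have hQ1split : (Q1.takeUntil a haQ1).length + (Q1.dropUntil a haQ1).length = Q1.length := by
        have := congrArg Walk.length (Q1.take_spec haQ1)
        rwa [Walk.length_append] at this
      have hPsplit : (P.takeUntil b hbPs).length + (P.dropUntil b hbPs).length = P.length := by
        have := congrArg Walk.length (P.take_spec hbPs)
        rwa [Walk.length_append] at this
      omega
    · have hodd1 := Nat.odd_iff.mp hOH1.2
      rw [Walk.length_append, Walk.length_reverse] at hodd1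
      omega
  refine ⟨hpar, ⟨hHhole, ?_⟩, ?_, ?_⟩
  · rw [Nat.even_iff, hHlen]; omega
  · exact JumpAux.isCycle_append_reverse hPpath hQ1p hst hQ1len hPQ1int
  · rw [Nat.odd_iff, Walk.length_append, Walk.length_reverse]
    omega
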